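/- For every n ≥ 0 and every integer k ≥ 0 there exist constants C > 0 and δ > 0 such that: for all ε ∈ (0, δ) and every positive solution (v_m)_{m ≥ -1} of the dP_I initial value problem with parameter ε, one has |vₙ − b_n^{(k)}(ε)| ≤ C ε^{k+2}. Moreover, there exist C' > 0 and δ' > 0 such that for all ε ∈ (0, δ') and every such positive solution, |vₙ − ((n+1)ε − 2(n+1)²ε² + (8(n+1)³ + 4(n+1))ε³)| ≤ C' ε⁴. -/

import Mathlib

/-- The map `T` acting on sequences: `T(u)₀ = ε/(1+u₁)`,
`T(u)ₙ = ε(n+1)/(1 + u_{n-1} + u_{n+1})` for `n ≥ 1`. -/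
noncomputable def Tmap (ε : ℝ) (u : ℕ → ℝ) : ℕ → ℝ
  | 0 => ε / (1 + u 1)
  | (n+1) => ε * ((n : ℝ) + 2) / (1 + u n + u (n+2))

/-- Shifted bound sequences: `bnd ε k = b^{(k-1)}`, i.e. `bnd ε 0 = b^{(-1)} = 0`
and `bnd ε (k+1) = T (bnd ε k)`, so that `b^{(k)} = bnd ε (k+1)` for `k ≥ -1`. -/
noncomputable def bnd (ε : ℝ) : ℕ → ℕ → ℝ
  | 0 => fun _ => 0
  | (k+1) => Tmap ε (bnd ε k)

/-- Shifted rescaled bounds: `rho ε k n = ρ_n^{(k-1)} = b_n^{(k-1)}/(ε(n+1))`. -/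
noncomputable def rho (ε : ℝ) (k n : ℕ) : ℝ := bnd ε k n / (ε * ((n : ℝ) + 1))

/-- The differences `Δd ε k n = Δ_n^{(k)} = (-1)^k (ρ_n^{(k)} - ρ_n^{(k-1)})` for `k ≥ 0`. -/
noncomputable def Δd (ε : ℝ) (k n : ℕ) : ℝ := (-1 : ℝ)^k * (rho ε (k+1) n - rho ε k n)

/-- The constants in the difference bounds. -/
noncomputable def Dc : ℕ → ℕ → ℝ
  | 0, n => (n : ℝ) + 1
  | (k+1), 0 => Dc k 1
  | (k+1), (n+1) => ((n : ℝ) + 2) * (Dc k n + Dc k (n+2))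

lemma Dc_pos : ∀ k n, 0 < Dc k n := by
  intro k
  induction k with
  | zero => intro n; simp only [Dc]; positivity
  | succ k ih =>
    intro n
    cases n with
    | zero => simpa [Dc] using ih 1
    | succ n =>
      have h1 := ih n
      have h2 := ih (n+2)
      simp only [Dc]
      positivity

lemma bnd_nonneg {ε : ℝ} (hε : 0 ≤ ε) : ∀ k n, 0 ≤ bnd ε k n := by
  intro k
  induction k with
  | zero => intro n; simp [bnd]
  | succ k ih =>
    intro n
    cases n with
    | zero =>
      simp only [bnd, Tmap]
      have := ih 1
      apply div_nonneg hε; linarith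
    | succ n =>
      simp only [bnd, Tmap]
      have h1 := ih n
      have h2 := ih (n+2)
      apply div_nonneg (by positivity); linarith

lemma bnd_diff {ε : ℝ} (hε : 0 < ε) : ∀ k n, |bnd ε (k+1) n - bnd ε k n| ≤ Dc k n * ε^(k+1) := by
  intro k
  induction k with
  | zero =>
    intro n
    cases n with
    | zero =>
      simp only [bnd, Tmap, Dc]
      norm_num
      rw [abs_of_pos hε]
    | succ n =>
      simp only [bnd, Tmap, Dc]
      norm_num
      rw [abs_of_pos hε, abs_of_pos (by positivity : (0:ℝ) < (n:ℝ)+2)]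
      nlinarith [hε.le]
  | succ k ih =>
    intro n
    have hnn := bnd_nonneg hε.le
    cases n with
    | zero =>
      have ha : 0 ≤ bnd ε (k+1) 1 := hnn _ _
      have hb : 0 ≤ bnd ε k 1 := hnn _ _
      have h1 : (0:ℝ) < 1 + bnd ε (k+1) 1 := by linarith
      have h2 : (0:ℝ) < 1 + bnd ε k 1 := by linarith
      have key : bnd ε (k+2) 0 - bnd ε (k+1) 0
          = ε * (bnd ε k 1 - bnd ε (k+1) 1) / ((1 + bnd ε (k+1) 1) * (1 + bnd ε k 1)) := by
        show Tmap ε (bnd ε (k+1)) 0 - Tmap ε (bnd ε k) 0 = _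
        simp only [Tmap]
        field_simp
        ring
      rw [key, abs_div, abs_of_pos (mul_pos h1 h2)]
      have hle : |ε * (bnd ε k 1 - bnd ε (k+1) 1)| / ((1 + bnd ε (k+1) 1) * (1 + bnd ε k 1))
          ≤ |ε * (bnd ε k 1 - bnd ε (k+1) 1)| := by
        apply div_le_self (abs_nonneg _)
        nlinarith
      refine hle.trans ?_
      rw [abs_mul, abs_of_pos hε, abs_sub_comm]
      have := ih 1
      calc ε * |bnd ε (k+1) 1 - bnd ε k 1| ≤ ε * (Dc k 1 * ε^(k+1)) := by
            apply mul_le_mul_of_nonneg_left this hε.le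
        _ = Dc (k+1) 0 * ε^(k+2) := by simp only [Dc]; ring
    | succ n =>
      have ha0 : 0 ≤ bnd ε (k+1) n := hnn _ _
      have ha2 : 0 ≤ bnd ε (k+1) (n+2) := hnn _ _
      have hb0 : 0 ≤ bnd ε k n := hnn _ _
      have hb2 : 0 ≤ bnd ε k (n+2) := hnn _ _
      have h1 : (0:ℝ) < 1 + bnd ε (k+1) n + bnd ε (k+1) (n+2) := by linarith
      have h2 : (0:ℝ) < 1 + bnd ε k n + bnd ε k (n+2) := by linarith
      have key : bnd ε (k+2) (n+1) - bnd ε (k+1) (n+1)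
          = ε * ((n:ℝ)+2) * ((bnd ε k n + bnd ε k (n+2)) - (bnd ε (k+1) n + bnd ε (k+1) (n+2)))
            / ((1 + bnd ε (k+1) n + bnd ε (k+1) (n+2)) * (1 + bnd ε k n + bnd ε k (n+2))) := by
        show Tmap ε (bnd ε (k+1)) (n+1) - Tmap ε (bnd ε k) (n+1) = _
        simp only [Tmap]
        field_simp
        ring
      rw [key, abs_div, abs_of_pos (mul_pos h1 h2)]
      have hle : |ε * ((n:ℝ)+2) * ((bnd ε k n + bnd ε k (n+2)) - (bnd ε (k+1) n + bnd ε (k+1) (n+2)))|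
            / ((1 + bnd ε (k+1) n + bnd ε (k+1) (n+2)) * (1 + bnd ε k n + bnd ε k (n+2)))
          ≤ |ε * ((n:ℝ)+2) * ((bnd ε k n + bnd ε k (n+2)) - (bnd ε (k+1) n + bnd ε (k+1) (n+2)))| := by
        apply div_le_self (abs_nonneg _)
        nlinarith
      refine hle.trans ?_
      rw [abs_mul, abs_of_pos (by positivity : (0:ℝ) < ε * ((n:ℝ)+2))]
      have hin := ih n
      have hin2 := ih (n+2)
      have htri : |(bnd ε k n + bnd ε k (n+2)) - (bnd ε (k+1) n + bnd ε (k+1) (n+2))|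
          ≤ |bnd ε (k+1) n - bnd ε k n| + |bnd ε (k+1) (n+2) - bnd ε k (n+2)| := by
        rw [show (bnd ε k n + bnd ε k (n+2)) - (bnd ε (k+1) n + bnd ε (k+1) (n+2))
            = -((bnd ε (k+1) n - bnd ε k n) + (bnd ε (k+1) (n+2) - bnd ε k (n+2))) by ring,
          abs_neg]
        exact abs_add_le _ _
      calc ε * ((n:ℝ)+2) * |(bnd ε k n + bnd ε k (n+2)) - (bnd ε (k+1) n + bnd ε (k+1) (n+2))|
          ≤ ε * ((n:ℝ)+2) * (Dc k n * ε^(k+1) + Dc k (n+2) * ε^(k+1)) := by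
            apply mul_le_mul_of_nonneg_left _ (by positivity)
            exact htri.trans (add_le_add hin hin2)
        _ = Dc (k+1) (n+1) * ε^(k+2) := by simp only [Dc]; ring

lemma Tmap_anti {ε : ℝ} (hε : 0 < ε) {u u' : ℕ → ℝ} (hu : ∀ n, 0 ≤ u n)
    (h : ∀ n, u n ≤ u' n) : ∀ n, Tmap ε u' n ≤ Tmap ε u n := by
  intro n
  cases n with
  | zero =>
    simp only [Tmap]
    apply div_le_div_of_nonneg_left hε.le (by have := hu 1; linarith) (by have := h 1; linarith)
  | succ n =>
    simp only [Tmap]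
    apply div_le_div_of_nonneg_left (by positivity)
      (by have := hu n; have := hu (n+2); linarith)
      (by have := h n; have := h (n+2); linarith)

lemma sandwich {ε : ℝ} (hε : 0 < ε) {w : ℕ → ℝ} (hfix : ∀ n, Tmap ε w n = w n)
    (hw : ∀ n, 0 < w n) :
    ∀ k, (Even k → ∀ n, bnd ε k n ≤ w n) ∧ (Odd k → ∀ n, w n ≤ bnd ε k n) := by
  intro k
  induction k with
  | zero =>
    constructor
    · intro _ n; simpa [bnd] using (hw n).le
    · intro h; exact absurd h (by simp)
  | succ k ih =>
    rcases Nat.even_or_odd k with hk | hk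
    · have hle : ∀ n, bnd ε k n ≤ w n := ih.1 hk
      have : ∀ n, w n ≤ bnd ε (k+1) n := by
        intro n
        rw [← hfix n]
        exact Tmap_anti hε (fun m => bnd_nonneg hε.le k m) hle n
      constructor
      · intro h; exact absurd hk (by simpa [Nat.even_add_one] using h)
      · intro _; exact this
    · have hle : ∀ n, w n ≤ bnd ε k n := ih.2 hk
      have : ∀ n, bnd ε (k+1) n ≤ w n := by
        intro n
        conv_rhs => rw [← hfix n]
        exact Tmap_anti hε (fun m => (hw m).le) hle n
      constructor
      · intro _; exact this
      · intro h
        exact absurd hk (Nat.odd_add_one.mp h)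

lemma key_est {ε : ℝ} (hε : 0 < ε) (k n : ℕ) {v : ℕ → ℝ} (h0 : v 0 = 0)
    (hrec : ∀ m : ℕ, v (m+1) * (v (m+2) + v m + 1) = ε * ((m : ℝ) + 1))
    (hpos : ∀ m : ℕ, 0 < v (m+1)) :
    |v (n+1) - bnd ε (k+1) n| ≤ Dc (k+1) n * ε^(k+2) := by
  have hwpos : ∀ m, 0 < (fun j => v (j+1)) m := fun m => hpos m
  have hfix : ∀ m, Tmap ε (fun j => v (j+1)) m = (fun j => v (j+1)) m := by
    intro m
    cases m with
    | zero =>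
      have h := hrec 0
      rw [h0] at h
      push_cast at h
      show ε / (1 + v 2) = v 1
      have hd : (0:ℝ) < 1 + v 2 := by have := hpos 1; linarith
      rw [div_eq_iff hd.ne']
      linear_combination -h
    | succ m =>
      have h := hrec (m+1)
      push_cast at h
      show ε * ((m:ℝ) + 2) / (1 + v (m+1) + v (m+3)) = v (m+2)
      have hd : (0:ℝ) < 1 + v (m+1) + v (m+3) := by
        have := hpos m; have := hpos (m+2); linarith
      rw [div_eq_iff hd.ne']
      linear_combination -h
  have hs1 := sandwich hε hfix hwpos (k+1)
  have hs2 := sandwich hε hfix hwpos (k+2)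
  have habs := bnd_diff hε (k+1) n
  have hA := le_abs_self (bnd ε (k+2) n - bnd ε (k+1) n)
  have hB := neg_abs_le (bnd ε (k+2) n - bnd ε (k+1) n)
  rcases Nat.even_or_odd (k+1) with h | h
  · have l1 := hs1.1 h n
    have l2 := hs2.2 (Nat.odd_add_one.mpr (Nat.not_odd_iff_even.mpr h)) n
    rw [abs_le]
    constructor <;> linarith
  · have l1 := hs1.2 h n
    have l2 := hs2.1 (Nat.even_add_one.mpr (Nat.not_even_iff_odd.mpr h)) n
    rw [abs_le]
    constructor <;> linarith

lemma bnd_one (ε : ℝ) : ∀ j, bnd ε 1 j = ε * ((j:ℝ) + 1) := by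
  intro j
  cases j with
  | zero => show ε / (1 + 0) = _; push_cast; norm_num
  | succ j =>
    show ε * ((j:ℝ) + 2) / (1 + 0 + 0) = _
    rw [show (1:ℝ) + 0 + 0 = 1 by norm_num, div_one]
    push_cast
    ring

lemma bnd_two {ε : ℝ} (hε : 0 < ε) (m : ℕ) :
    bnd ε 2 m = ε * ((m:ℝ) + 1) / (1 + 2 * ε * ((m:ℝ) + 1)) := by
  cases m with
  | zero =>
    show ε / (1 + bnd ε 1 1) = _
    rw [bnd_one]
    push_cast
    rw [div_eq_div_iff (by positivity) (by positivity)]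
    ring
  | succ m =>
    show ε * ((m:ℝ) + 2) / (1 + bnd ε 1 m + bnd ε 1 (m+2)) = _
    rw [bnd_one, bnd_one]
    push_cast
    rw [div_eq_div_iff (by positivity) (by positivity)]
    ring

lemma bnd_three_sub {ε : ℝ} (hε : 0 < ε) (n : ℕ) :
    bnd ε 3 n - (((n:ℝ)+1) * ε - 2 * ((n:ℝ)+1)^2 * ε^2 + (8 * ((n:ℝ)+1)^3 + 4 * ((n:ℝ)+1)) * ε^3)
    = -(ε^4 * ((32 * ((n:ℝ)+1)^4 + 40 * ((n:ℝ)+1)^2)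
        + ε * (64 * ((n:ℝ)+1)^5 - 32 * ((n:ℝ)+1)^3 - 32 * ((n:ℝ)+1))))
      / (1 + 6 * ε * ((n:ℝ)+1) + 8 * ε^2 * (((n:ℝ)+1)^2 - 1)) := by
  cases n with
  | zero =>
    have e1 : bnd ε 3 0 = ε / (1 + bnd ε 2 1) := rfl
    rw [e1, bnd_two hε 1]
    push_cast
    have h1 : (0:ℝ) < 1 + 2 * ε * (1 + 1) := by positivity
    have h2 : (0:ℝ) < 1 + ε * (1 + 1) / (1 + 2 * ε * (1 + 1)) := by positivity
    have h3 : (0:ℝ) < 1 + 6 * ε * (0 + 1) + 8 * ε^2 * ((0 + 1)^2 - 1) := by norm_num; positivity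
    field_simp
    ring
  | succ n =>
    have e1 : bnd ε 3 (n+1) = ε * ((n:ℝ) + 2) / (1 + bnd ε 2 n + bnd ε 2 (n+2)) := rfl
    rw [e1, bnd_two hε n, bnd_two hε (n+2)]
    push_cast
    have hn : (0:ℝ) ≤ (n:ℝ) := Nat.cast_nonneg n
    have h1 : (0:ℝ) < 1 + 2 * ε * ((n:ℝ) + 1) := by positivity
    have h2 : (0:ℝ) < 1 + 2 * ε * ((n:ℝ) + 2 + 1) := by positivity
    have h3 : (0:ℝ) < 1 + 6 * ε * ((n:ℝ) + 1 + 1) + 8 * ε^2 * (((n:ℝ) + 1 + 1)^2 - 1) := by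
      nlinarith [sq_nonneg ε, sq_nonneg ((n:ℝ))]
    have h4 : (0:ℝ) < 1 + ε * ((n:ℝ) + 1) / (1 + 2 * ε * ((n:ℝ) + 1))
        + ε * ((n:ℝ) + 2 + 1) / (1 + 2 * ε * ((n:ℝ) + 2 + 1)) := by positivity
    rw [eq_div_iff h3.ne']
    field_simp
    ring

lemma bnd_three_close {ε : ℝ} (hε : 0 < ε) (hε1 : ε ≤ 1) (n : ℕ) :
    |bnd ε 3 n - (((n:ℝ)+1) * ε - 2 * ((n:ℝ)+1)^2 * ε^2 + (8 * ((n:ℝ)+1)^3 + 4 * ((n:ℝ)+1)) * ε^3)|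
    ≤ (64 * ((n:ℝ)+1)^5 + 32 * ((n:ℝ)+1)^4 + 40 * ((n:ℝ)+1)^2) * ε^4 := by
  set N : ℝ := (n:ℝ) + 1 with hN
  have hN1 : (1:ℝ) ≤ N := by
    rw [hN]; have := Nat.cast_nonneg (α := ℝ) n; linarith
  have hN0 : (0:ℝ) ≤ N := by linarith
  have hNsq : (0:ℝ) ≤ N^2 - 1 := by nlinarith
  have ha : (0:ℝ) ≤ ε^2 * (N^2 - 1) := mul_nonneg (sq_nonneg ε) hNsq
  have hb : (0:ℝ) ≤ ε * N := mul_nonneg hε.le hN0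
  have hQ : (0:ℝ) < 1 + 6 * ε * N + 8 * ε^2 * (N^2 - 1) := by nlinarith
  have hBnn : (0:ℝ) ≤ 64 * N^5 - 32 * N^3 - 32 * N := by
    nlinarith [mul_nonneg (mul_nonneg hN0 hNsq) (by positivity : (0:ℝ) ≤ 2 * N^2 + 1)]
  have hAnn : (0:ℝ) ≤ 32 * N^4 + 40 * N^2 := by positivity
  have hx : (0:ℝ) ≤ ε^4 * ((32 * N^4 + 40 * N^2) + ε * (64 * N^5 - 32 * N^3 - 32 * N)) := by
    apply mul_nonneg (by positivity)
    have := mul_nonneg hε.le hBnn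
    linarith
  rw [bnd_three_sub hε n, abs_div, abs_neg, abs_of_nonneg hx, abs_of_pos hQ]
  have hQ1 : (1:ℝ) ≤ 1 + 6 * ε * N + 8 * ε^2 * (N^2 - 1) := by nlinarith
  calc ε^4 * ((32 * N^4 + 40 * N^2) + ε * (64 * N^5 - 32 * N^3 - 32 * N))
        / (1 + 6 * ε * N + 8 * ε^2 * (N^2 - 1))
      ≤ ε^4 * ((32 * N^4 + 40 * N^2) + ε * (64 * N^5 - 32 * N^3 - 32 * N)) :=
        div_le_self hx hQ1
    _ ≤ (64 * N^5 + 32 * N^4 + 40 * N^2) * ε^4 := by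
        have hstep : (32 * N^4 + 40 * N^2) + ε * (64 * N^5 - 32 * N^3 - 32 * N)
            ≤ 64 * N^5 + 32 * N^4 + 40 * N^2 := by
          have h1 : ε * (64 * N^5 - 32 * N^3 - 32 * N) ≤ 64 * N^5 - 32 * N^3 - 32 * N := by
            nlinarith
          have h2 : (0:ℝ) ≤ N^3 := by positivity
          linarith
        have h4 : (0:ℝ) ≤ ε^4 := by positivity
        exact le_trans (mul_le_mul_of_nonneg_left hstep h4) (le_of_eq (mul_comm _ _))


/-- Small-`ε` asymptotics of positive solutions: any positive solution agrees with
`b_n^{(k)}(ε)` up to `O(ε^{k+2})`, and with the explicit cubic polynomial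
`(n+1)ε - 2(n+1)²ε² + (8(n+1)³ + 4(n+1))ε³` up to `O(ε⁴)`.
Here `v m` denotes `v_{m-1}`. -/
theorem statement12 (n k : ℕ) :
    (∃ C > (0 : ℝ), ∃ δ > (0 : ℝ), ∀ ε : ℝ, 0 < ε → ε < δ →
      ∀ v : ℕ → ℝ, v 0 = 0 →
        (∀ m : ℕ, v (m+1) * (v (m+2) + v m + 1) = ε * ((m : ℝ) + 1)) →
        (∀ m : ℕ, 0 < v (m+1)) →
        |v (n+1) - bnd ε (k+1) n| ≤ C * ε^(k+2)) ∧
    (∃ C' > (0 : ℝ), ∃ δ' > (0 : ℝ), ∀ ε : ℝ, 0 < ε → ε < δ' →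
      ∀ v : ℕ → ℝ, v 0 = 0 →
        (∀ m : ℕ, v (m+1) * (v (m+2) + v m + 1) = ε * ((m : ℝ) + 1)) →
        (∀ m : ℕ, 0 < v (m+1)) →
        |v (n+1) - (((n : ℝ) + 1) * ε - 2 * ((n : ℝ) + 1)^2 * ε^2
          + (8 * ((n : ℝ) + 1)^3 + 4 * ((n : ℝ) + 1)) * ε^3)| ≤ C' * ε^4) := by
  constructor
  · exact ⟨Dc (k+1) n, Dc_pos _ _, 1, one_pos,
      fun ε hε _ v h0 hrec hpos => key_est hε k n h0 hrec hpos⟩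
  · refine ⟨Dc 3 n + (64 * ((n:ℝ)+1)^5 + 32 * ((n:ℝ)+1)^4 + 40 * ((n:ℝ)+1)^2), ?_, 1, one_pos, ?_⟩
    · have := Dc_pos 3 n; positivity
    · intro ε hε hε1 v h0 hrec hpos
      have h1 := key_est hε 2 n h0 hrec hpos
      have h2 := bnd_three_close hε hε1.le n
      calc |v (n+1) - (((n : ℝ) + 1) * ε - 2 * ((n : ℝ) + 1)^2 * ε^2
              + (8 * ((n : ℝ) + 1)^3 + 4 * ((n : ℝ) + 1)) * ε^3)|
          ≤ |v (n+1) - bnd ε 3 n| + |bnd ε 3 n - (((n : ℝ) + 1) * ε - 2 * ((n : ℝ) + 1)^2 * ε^2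
              + (8 * ((n : ℝ) + 1)^3 + 4 * ((n : ℝ) + 1)) * ε^3)| := abs_sub_le _ _ _
        _ ≤ Dc 3 n * ε^4 + (64 * ((n:ℝ)+1)^5 + 32 * ((n:ℝ)+1)^4 + 40 * ((n:ℝ)+1)^2) * ε^4 := by
            exact add_le_add h1 h2
        _ = (Dc 3 n + (64 * ((n:ℝ)+1)^5 + 32 * ((n:ℝ)+1)^4 + 40 * ((n:ℝ)+1)^2)) * ε^4 := by ring
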